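/- Suppose that for each receiver r, (γ^{r,k})_{k∈𝒦_r} is an incentive compatible menu, and define the truthful play probabilities p^{r,k}_θ := (1/μ_θ) Σ_{ξ : b^{r,k}_ξ = a1} γ^{r,k}_ξ ξ_θ ∈ [0,1]. Then there exist persuasive, incentive compatible direct marginal menus (x^{r,k})_{k∈𝒦_r} for each receiver r and, for every type profile 𝐤 ∈ 𝒦̄ and every state θ, a probability distribution φ^𝐤_θ on the subsets of ℛ with marginals Σ_{R ∋ r} φ^𝐤_θ(R) = x^{r,k_r}_θ for all r, such that for every family (ψ^𝐤_θ)_{𝐤∈𝒦̄, θ∈Θ} of probability distributions on the subsets of ℛ with marginals Σ_{R ∋ r} ψ^𝐤_θ(R) = p^{r,k_r}_θ for all r, one has Σ_{𝐤∈𝒦̄} λ_𝐤 Σ_θ μ_θ Σ_{R⊆ℛ} φ^𝐤_θ(R) f_θ(R) ≥ Σ_{𝐤∈𝒦̄} λ_𝐤 Σ_θ μ_θ Σ_{R⊆ℛ} ψ^𝐤_θ(R) f_θ(R). (In multi-receiver instances there always exists an optimal sender's strategy that uses menus of direct and persuasive marginal signaling schemes.) -/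
import Mathlib


open Finset

noncomputable section

/-- Best response of a receiver of type `k` at posterior `ξ`, with binary actions
(`true` = a1, `false` = a0) and ties broken in favor of `a1`. -/
noncomputable def bestA1 {Θ 𝒦 : Type*} [Fintype Θ]
    (u : 𝒦 → Θ → Bool → ℝ) (k : 𝒦) (ξ : Θ → ℝ) : Bool :=
  if ∑ θ, ξ θ * u k θ false ≤ ∑ θ, ξ θ * u k θ true then true else false

lemma bestA1_spec' {Θ 𝒦 : Type*} [Fintype Θ]
    (u : 𝒦 → Θ → Bool → ℝ) (k : 𝒦) (ξ : Θ → ℝ) (a : Bool) :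
    ∑ θ, ξ θ * u k θ a ≤ ∑ θ, ξ θ * u k θ (bestA1 u k ξ) := by
  unfold bestA1; split_ifs with h <;> cases a <;> simp_all <;> linarith

lemma bestA1_true {Θ 𝒦 : Type*} [Fintype Θ]
    (u : 𝒦 → Θ → Bool → ℝ) (k : 𝒦) (ξ : Θ → ℝ) (h : bestA1 u k ξ = true) :
    ∑ θ, ξ θ * u k θ false ≤ ∑ θ, ξ θ * u k θ true := by
  by_contra hc; unfold bestA1 at h; simp [hc] at h

lemma bestA1_false {Θ 𝒦 : Type*} [Fintype Θ]
    (u : 𝒦 → Θ → Bool → ℝ) (k : 𝒦) (ξ : Θ → ℝ) (h : bestA1 u k ξ = false) :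
    ∑ θ, ξ θ * u k θ true ≤ ∑ θ, ξ θ * u k θ false := by
  unfold bestA1 at h; split_ifs at h with hc; linarith

lemma sum_swap_ite' {Θ I : Type*} [Fintype Θ] (s : Finset I) (P : I → Prop) [DecidablePred P]
    (g : I → ℝ) (ξ : I → Θ → ℝ) (c : Θ → ℝ) :
    ∑ θ, (∑ i ∈ s, if P i then g i * ξ i θ else 0) * c θ =
      ∑ i ∈ s, if P i then g i * ∑ θ, ξ i θ * c θ else 0 := by
  simp_rw [Finset.sum_mul, ite_mul, zero_mul]
  rw [Finset.sum_comm]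
  refine Finset.sum_congr rfl fun i _ => ?_
  split_ifs with h
  · rw [Finset.mul_sum]; exact Finset.sum_congr rfl fun θ _ => by ring
  · simp

def indCoup {ℛ : Type*} [Fintype ℛ] [DecidableEq ℛ] (q : ℛ → ℝ) (R : Finset ℛ) : ℝ :=
  (∏ r ∈ R, q r) * ∏ r ∈ Rᶜ, (1 - q r)

lemma indCoup_nonneg {ℛ : Type*} [Fintype ℛ] [DecidableEq ℛ] (q : ℛ → ℝ)
    (hq : ∀ r, q r ∈ Set.Icc (0:ℝ) 1) (R : Finset ℛ) : 0 ≤ indCoup q R :=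
  mul_nonneg (Finset.prod_nonneg fun r _ => (hq r).1)
    (Finset.prod_nonneg fun r _ => by linarith [(hq r).2])

lemma indCoup_sum {ℛ : Type*} [Fintype ℛ] [DecidableEq ℛ] (q : ℛ → ℝ) :
    ∑ R : Finset ℛ, indCoup q R = 1 := by
  have h := Finset.prod_add q (fun r => 1 - q r) (univ : Finset ℛ)
  simp only [add_sub_cancel, Finset.prod_const_one, Finset.powerset_univ] at h
  rw [h]
  unfold indCoup
  exact Finset.sum_congr rfl fun R _ => by rw [Finset.compl_eq_univ_sdiff]

lemma indCoup_marginal {ℛ : Type*} [Fintype ℛ] [DecidableEq ℛ] (q : ℛ → ℝ) (r : ℛ) :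
    ∑ R ∈ univ.filter (fun R : Finset ℛ => r ∈ R), indCoup q R = q r := by
  have key : ∑ R ∈ univ.filter (fun R : Finset ℛ => r ∈ R), indCoup q R =
      ∑ T ∈ (univ.erase r).powerset, q r * ((∏ i ∈ T, q i) * ∏ i ∈ (univ.erase r) \ T, (1 - q i)) := by
    refine Finset.sum_nbij' (fun R => R.erase r) (fun T => insert r T) ?_ ?_ ?_ ?_ ?_
    · intro R hR
      simp only [mem_filter, mem_univ, true_and] at hR
      simp only [Finset.mem_powerset]
      intro i hi
      simp only [Finset.mem_erase] at hi ⊢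
      exact ⟨hi.1, mem_univ i⟩
    · intro T hT
      simp only [Finset.mem_powerset] at hT
      simp only [mem_filter, mem_univ, true_and, Finset.mem_insert_self]
    · intro R hR
      simp only [mem_filter, mem_univ, true_and] at hR
      exact Finset.insert_erase hR
    · intro T hT
      simp only [Finset.mem_powerset] at hT
      refine Finset.erase_insert fun hc => ?_
      exact absurd (hT hc) (by simp)
    · intro R hR
      simp only [mem_filter, mem_univ, true_and] at hR
      unfold indCoup
      have h1 : ∏ i ∈ R, q i = q r * ∏ i ∈ R.erase r, q i :=
        (Finset.mul_prod_erase R q hR).symm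
      have h2 : Rᶜ = (univ.erase r) \ R.erase r := by
        ext i
        simp only [Finset.mem_compl, Finset.mem_sdiff, Finset.mem_erase, mem_univ, true_and,
          and_true]
        constructor
        · intro hi; exact ⟨fun h => hi (h ▸ hR), fun h => hi h.2⟩
        · intro ⟨h3, h4⟩ hi
          rcases eq_or_ne i r with h | h
          · exact h3 h
          · exact h4 ⟨h, hi⟩
      rw [h1, h2]; ring
  rw [key, ← Finset.mul_sum]
  have h := Finset.prod_add q (fun r => 1 - q r) (univ.erase r)
  simp only [add_sub_cancel, Finset.prod_const_one] at h
  rw [← h, mul_one]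

/-- Feasible couplings with given marginals. -/
def Feas {ℛ : Type*} [Fintype ℛ] [DecidableEq ℛ] (q : ℛ → ℝ) : Set ((Finset ℛ) → ℝ) :=
  {φ | (∀ R, 0 ≤ φ R) ∧ (∑ R : Finset ℛ, φ R = 1) ∧
    ∀ r, ∑ R ∈ univ.filter (fun R : Finset ℛ => r ∈ R), φ R = q r}

lemma exists_max_coupling {ℛ : Type*} [Fintype ℛ] [DecidableEq ℛ] (q : ℛ → ℝ)
    (hq : ∀ r, q r ∈ Set.Icc (0:ℝ) 1) (F : Finset ℛ → ℝ) :
    ∃ φ : Finset ℛ → ℝ, φ ∈ Feas q ∧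
      ∀ ψ ∈ Feas q, ∑ R : Finset ℛ, ψ R * F R ≤ ∑ R : Finset ℛ, φ R * F R := by
  have hne : (Feas q).Nonempty :=
    ⟨indCoup q, indCoup_nonneg q hq, indCoup_sum q, fun r => indCoup_marginal q r⟩
  have hclosed : IsClosed (Feas q) := by
    have h1 : IsClosed {φ : Finset ℛ → ℝ | ∀ R, 0 ≤ φ R} := by
      have : {φ : Finset ℛ → ℝ | ∀ R, 0 ≤ φ R} = ⋂ R, {φ | 0 ≤ φ R} := by
        ext; simp [Set.mem_iInter]
      rw [this]
      exact isClosed_iInter fun R => isClosed_le continuous_const (continuous_apply R)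
    have h2 : IsClosed {φ : Finset ℛ → ℝ | ∑ R : Finset ℛ, φ R = 1} :=
      isClosed_eq (continuous_finset_sum _ fun R _ => continuous_apply R) continuous_const
    have h3 : IsClosed {φ : Finset ℛ → ℝ |
        ∀ r, ∑ R ∈ univ.filter (fun R : Finset ℛ => r ∈ R), φ R = q r} := by
      have : {φ : Finset ℛ → ℝ | ∀ r, ∑ R ∈ univ.filter (fun R : Finset ℛ => r ∈ R), φ R = q r}
          = ⋂ r, {φ | ∑ R ∈ univ.filter (fun R : Finset ℛ => r ∈ R), φ R = q r} := by
        ext; simp [Set.mem_iInter]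
      rw [this]
      exact isClosed_iInter fun r =>
        isClosed_eq (continuous_finset_sum _ fun R _ => continuous_apply R) continuous_const
    have : Feas q = {φ : Finset ℛ → ℝ | ∀ R, 0 ≤ φ R} ∩
        ({φ | ∑ R : Finset ℛ, φ R = 1} ∩ {φ | ∀ r,
          ∑ R ∈ univ.filter (fun R : Finset ℛ => r ∈ R), φ R = q r}) := by
      ext φ; simp [Feas, Set.mem_inter_iff, and_assoc]
    rw [this]
    exact h1.inter (h2.inter h3)
  have hsub : Feas q ⊆ Set.pi Set.univ (fun _ : Finset ℛ => Set.Icc (0:ℝ) 1) := by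
    rintro φ ⟨h0, h1, -⟩ R -
    refine ⟨h0 R, ?_⟩
    calc φ R ≤ ∑ R' : Finset ℛ, φ R' := Finset.single_le_sum (fun i _ => h0 i) (mem_univ R)
    _ = 1 := h1
  have hcpt : IsCompact (Feas q) :=
    (isCompact_univ_pi fun _ => isCompact_Icc).of_isClosed_subset hclosed hsub
  obtain ⟨φ, hφ, hmax⟩ := hcpt.exists_isMaxOn hne
    ((continuous_finset_sum _ fun R _ => (continuous_apply R).mul continuous_const).continuousOn
      (s := Feas q))
  exact ⟨φ, hφ, fun ψ hψ => hmax hψ⟩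

/-- Multi-receiver Bayesian persuasion with type reporting, binary actions and
no inter-agent externalities: given incentive compatible menus `(γ r k)` for the receivers, with
truthful play probabilities `p r k θ`, there exist persuasive incentive compatible direct
marginal menus `(x r k)` and, for every type profile in the support of `λ` and every state, a
distribution `φ` over subsets of receivers with marginals `x`, whose sender expected utility is
at least that of every family `ψ` of distributions with marginals `p`. -/
theorem exists_optimal_direct_marginal_strategy
    {Θ ℛ : Type*} {𝒦 : ℛ → Type*}
    [Fintype Θ] [Fintype ℛ] [DecidableEq ℛ] [∀ r, Fintype (𝒦 r)]
    [Nonempty Θ] [Nonempty ℛ] [∀ r, Nonempty (𝒦 r)]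
    (μ : Θ → ℝ) (hμpos : ∀ θ, 0 < μ θ) (hμsum : ∑ θ, μ θ = 1)
    (u : ∀ r : ℛ, 𝒦 r → Θ → Bool → ℝ)
    (hu : ∀ r k θ a, u r k θ a ∈ Set.Icc (0 : ℝ) 1)
    -- the sender's monotone set functions
    (f : Θ → Finset ℛ → ℝ) (hf01 : ∀ θ R, f θ R ∈ Set.Icc (0 : ℝ) 1)
    (hfmono : ∀ θ, ∀ R R' : Finset ℛ, R ⊆ R' → f θ R ≤ f θ R')
    -- distribution over type profiles
    (lam : (∀ r, 𝒦 r) → ℝ) (hlam : ∀ 𝕜, 0 ≤ lam 𝕜) (hlamsum : ∑ 𝕜, lam 𝕜 = 1)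
    -- the given incentive compatible menus, one per receiver
    (γ : ∀ r : ℛ, 𝒦 r → ((Θ → ℝ) →₀ ℝ))
    (hγnn : ∀ r k ξ, 0 ≤ γ r k ξ)
    (hγpost : ∀ r k, ∀ ξ ∈ (γ r k).support, (∀ θ, 0 ≤ ξ θ) ∧ ∑ θ, ξ θ = 1)
    (hγone : ∀ r k, ∑ ξ ∈ (γ r k).support, γ r k ξ = 1)
    (hγbayes : ∀ r k θ, ∑ ξ ∈ (γ r k).support, γ r k ξ * ξ θ = μ θ)
    (hγIC : ∀ r : ℛ, ∀ k k' : 𝒦 r, k ≠ k' →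
      ∑ ξ ∈ (γ r k').support, γ r k' ξ * ∑ θ, ξ θ * u r k θ (bestA1 (u r) k ξ) ≤
        ∑ ξ ∈ (γ r k).support, γ r k ξ * ∑ θ, ξ θ * u r k θ (bestA1 (u r) k ξ))
    -- truthful play probabilities
    (p : ∀ r : ℛ, 𝒦 r → Θ → ℝ)
    (hp : ∀ r k θ, p r k θ =
      (∑ ξ ∈ (γ r k).support, (if bestA1 (u r) k ξ = true then γ r k ξ * ξ θ else 0)) / μ θ) :
    ∃ (x : ∀ r : ℛ, 𝒦 r → Θ → ℝ) (φ : (∀ r, 𝒦 r) → Θ → Finset ℛ → ℝ),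
      (∀ r k θ, x r k θ ∈ Set.Icc (0 : ℝ) 1) ∧
      -- persuasiveness of each direct marginal menu
      (∀ r k, 0 ≤ ∑ θ, μ θ * x r k θ * (u r k θ true - u r k θ false)) ∧
      (∀ r k, 0 ≤ ∑ θ, μ θ * (1 - x r k θ) * (u r k θ false - u r k θ true)) ∧
      -- incentive compatibility of each direct marginal menu
      (∀ r : ℛ, ∀ k k' : 𝒦 r, k ≠ k' →
        max (∑ θ, μ θ * x r k' θ * u r k θ true) (∑ θ, μ θ * x r k' θ * u r k θ false) +
          max (∑ θ, μ θ * (1 - x r k' θ) * u r k θ true)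
              (∑ θ, μ θ * (1 - x r k' θ) * u r k θ false) ≤
        ∑ θ, μ θ * (x r k θ * u r k θ true + (1 - x r k θ) * u r k θ false)) ∧
      -- `φ` is a signaling scheme consistent with the marginals `x`
      (∀ 𝕜 : ∀ r, 𝒦 r, lam 𝕜 ≠ 0 → ∀ θ,
        (∀ R : Finset ℛ, 0 ≤ φ 𝕜 θ R) ∧
        (∑ R : Finset ℛ, φ 𝕜 θ R = 1) ∧
        (∀ r : ℛ, ∑ R ∈ Finset.univ.filter (fun R : Finset ℛ => r ∈ R), φ 𝕜 θ R =
          x r (𝕜 r) θ)) ∧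
      -- optimality against every scheme consistent with the truthful play probabilities `p`
      (∀ ψ : (∀ r, 𝒦 r) → Θ → Finset ℛ → ℝ,
        (∀ 𝕜 : ∀ r, 𝒦 r, lam 𝕜 ≠ 0 → ∀ θ,
          (∀ R : Finset ℛ, 0 ≤ ψ 𝕜 θ R) ∧
          (∑ R : Finset ℛ, ψ 𝕜 θ R = 1) ∧
          (∀ r : ℛ, ∑ R ∈ Finset.univ.filter (fun R : Finset ℛ => r ∈ R), ψ 𝕜 θ R =
            p r (𝕜 r) θ)) →
        ∑ 𝕜, lam 𝕜 * ∑ θ, μ θ * ∑ R : Finset ℛ, ψ 𝕜 θ R * f θ R ≤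
          ∑ 𝕜, lam 𝕜 * ∑ θ, μ θ * ∑ R : Finset ℛ, φ 𝕜 θ R * f θ R) := by
  classical
  -- notation for numerator sums
  set N : ∀ r : ℛ, 𝒦 r → Θ → ℝ := fun r k θ =>
    ∑ ξ ∈ (γ r k).support, (if bestA1 (u r) k ξ = true then γ r k ξ * ξ θ else 0) with hNdef
  set M : ∀ r : ℛ, 𝒦 r → Θ → ℝ := fun r k θ =>
    ∑ ξ ∈ (γ r k).support, (if bestA1 (u r) k ξ = false then γ r k ξ * ξ θ else 0) with hMdef
  have hNnn : ∀ r k θ, 0 ≤ N r k θ := fun r k θ =>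
    Finset.sum_nonneg fun ξ hξ => by
      split_ifs
      · exact mul_nonneg (hγnn r k ξ) ((hγpost r k ξ hξ).1 θ)
      · exact le_refl 0
  have hNM : ∀ r k θ, N r k θ + M r k θ = μ θ := by
    intro r k θ
    rw [hNdef, hMdef, ← Finset.sum_add_distrib, ← hγbayes r k θ]
    refine Finset.sum_congr rfl fun ξ _ => ?_
    cases h : bestA1 (u r) k ξ <;> simp [h]
  have hNle : ∀ r k θ, N r k θ ≤ μ θ := by
    intro r k θ
    have hMnn : 0 ≤ M r k θ := Finset.sum_nonneg fun ξ hξ => by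
      split_ifs
      · exact mul_nonneg (hγnn r k ξ) ((hγpost r k ξ hξ).1 θ)
      · exact le_refl 0
    linarith [hNM r k θ]
  have hμp : ∀ r k θ, μ θ * p r k θ = N r k θ := by
    intro r k θ
    rw [hp r k θ, mul_div_assoc', mul_div_cancel_left₀ _ (hμpos θ).ne']
  have hμ1p : ∀ r k θ, μ θ * (1 - p r k θ) = M r k θ := by
    intro r k θ
    have := hNM r k θ
    have := hμp r k θ
    ring_nf
    linarith
  have hx01 : ∀ r k θ, p r k θ ∈ Set.Icc (0:ℝ) 1 := by
    intro r k θ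
    rw [hp r k θ]
    constructor
    · exact div_nonneg (hNnn r k θ) (hμpos θ).le
    · rw [div_le_one (hμpos θ)]; exact hNle r k θ
  -- key sum-swapping identities
  have hswapN : ∀ (r : ℛ) (k k' : 𝒦 r) (c : Θ → ℝ),
      ∑ θ, μ θ * p r k' θ * c θ =
        ∑ ξ ∈ (γ r k').support,
          (if bestA1 (u r) k' ξ = true then γ r k' ξ * ∑ θ, ξ θ * c θ else 0) := by
    intro r k k' c
    calc ∑ θ, μ θ * p r k' θ * c θ = ∑ θ, (N r k' θ) * c θ :=
          Finset.sum_congr rfl fun θ _ => by rw [hμp]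
      _ = _ := sum_swap_ite' _ _ _ _ _
  have hswapM : ∀ (r : ℛ) (k k' : 𝒦 r) (c : Θ → ℝ),
      ∑ θ, μ θ * (1 - p r k' θ) * c θ =
        ∑ ξ ∈ (γ r k').support,
          (if bestA1 (u r) k' ξ = false then γ r k' ξ * ∑ θ, ξ θ * c θ else 0) := by
    intro r k k' c
    calc ∑ θ, μ θ * (1 - p r k' θ) * c θ = ∑ θ, (M r k' θ) * c θ :=
          Finset.sum_congr rfl fun θ _ => by rw [hμ1p]
      _ = _ := sum_swap_ite' _ _ _ _ _
  -- choose the maximizing couplings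
  choose φ hφF hφmax using fun (𝕜 : ∀ r, 𝒦 r) (θ : Θ) =>
    exists_max_coupling (fun r => p r (𝕜 r) θ) (fun r => hx01 r (𝕜 r) θ) (f θ)
  refine ⟨p, φ, hx01, ?_, ?_, ?_, ?_, ?_⟩
  · -- persuasiveness a1
    intro r k
    rw [hswapN r k k (fun θ => u r k θ true - u r k θ false)]
    refine Finset.sum_nonneg fun ξ hξ => ?_
    split_ifs with h
    · refine mul_nonneg (hγnn r k ξ) ?_
      have := bestA1_true (u r) k ξ h
      have e : ∑ θ, ξ θ * (u r k θ true - u r k θ false)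
          = ∑ θ, ξ θ * u r k θ true - ∑ θ, ξ θ * u r k θ false := by
        rw [← Finset.sum_sub_distrib]
        exact Finset.sum_congr rfl fun θ _ => by ring
      rw [e]; linarith
    · exact le_refl 0
  · -- persuasiveness a0
    intro r k
    rw [hswapM r k k (fun θ => u r k θ false - u r k θ true)]
    refine Finset.sum_nonneg fun ξ hξ => ?_
    split_ifs with h
    · refine mul_nonneg (hγnn r k ξ) ?_
      have := bestA1_false (u r) k ξ h
      have e : ∑ θ, ξ θ * (u r k θ false - u r k θ true)
          = ∑ θ, ξ θ * u r k θ false - ∑ θ, ξ θ * u r k θ true := by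
        rw [← Finset.sum_sub_distrib]
        exact Finset.sum_congr rfl fun θ _ => by ring
      rw [e]; linarith
    · exact le_refl 0
  · -- incentive compatibility
    intro r k k' hne
    set T : ℝ := ∑ ξ ∈ (γ r k').support,
      (if bestA1 (u r) k' ξ = true then γ r k' ξ * ∑ θ, ξ θ * u r k θ (bestA1 (u r) k ξ) else 0)
      with hT
    set T' : ℝ := ∑ ξ ∈ (γ r k').support,
      (if bestA1 (u r) k' ξ = false then γ r k' ξ * ∑ θ, ξ θ * u r k θ (bestA1 (u r) k ξ) else 0)
      with hT'
    have hA : ∀ a : Bool, ∑ θ, μ θ * p r k' θ * u r k θ a ≤ T := by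
      intro a
      rw [hswapN r k k' (fun θ => u r k θ a), hT]
      refine Finset.sum_le_sum fun ξ hξ => ?_
      split_ifs with h
      · exact mul_le_mul_of_nonneg_left (bestA1_spec' (u r) k ξ a) (hγnn r k' ξ)
      · exact le_refl 0
    have hB : ∀ a : Bool, ∑ θ, μ θ * (1 - p r k' θ) * u r k θ a ≤ T' := by
      intro a
      rw [hswapM r k k' (fun θ => u r k θ a), hT']
      refine Finset.sum_le_sum fun ξ hξ => ?_
      split_ifs with h
      · exact mul_le_mul_of_nonneg_left (bestA1_spec' (u r) k ξ a) (hγnn r k' ξ)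
      · exact le_refl 0
    have hTT' : T + T' = ∑ ξ ∈ (γ r k').support,
        γ r k' ξ * ∑ θ, ξ θ * u r k θ (bestA1 (u r) k ξ) := by
      rw [hT, hT', ← Finset.sum_add_distrib]
      refine Finset.sum_congr rfl fun ξ _ => ?_
      cases h : bestA1 (u r) k' ξ <;> simp [h]
    have hRHS : ∑ θ, μ θ * (p r k θ * u r k θ true + (1 - p r k θ) * u r k θ false) =
        ∑ ξ ∈ (γ r k).support, γ r k ξ * ∑ θ, ξ θ * u r k θ (bestA1 (u r) k ξ) := by
      have e : ∀ θ, μ θ * (p r k θ * u r k θ true + (1 - p r k θ) * u r k θ false)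
          = μ θ * p r k θ * u r k θ true + μ θ * (1 - p r k θ) * u r k θ false := fun θ => by ring
      rw [Finset.sum_congr rfl fun θ _ => e θ, Finset.sum_add_distrib,
        hswapN r k k (fun θ => u r k θ true), hswapM r k k (fun θ => u r k θ false),
        ← Finset.sum_add_distrib]
      refine Finset.sum_congr rfl fun ξ _ => ?_
      cases h : bestA1 (u r) k ξ <;> simp [h]
    rw [hRHS]
    calc max (∑ θ, μ θ * p r k' θ * u r k θ true) (∑ θ, μ θ * p r k' θ * u r k θ false) +
          max (∑ θ, μ θ * (1 - p r k' θ) * u r k θ true)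
              (∑ θ, μ θ * (1 - p r k' θ) * u r k θ false)
        ≤ T + T' := add_le_add (max_le (hA true) (hA false)) (max_le (hB true) (hB false))
      _ = _ := hTT'
      _ ≤ _ := hγIC r k k' hne
  · -- φ is a feasible scheme
    intro 𝕜 _ θ
    exact (hφF 𝕜 θ : φ 𝕜 θ ∈ Feas _)
  · -- optimality
    intro ψ hψ
    refine Finset.sum_le_sum fun 𝕜 _ => ?_
    rcases eq_or_ne (lam 𝕜) 0 with h0 | h0
    · simp [h0]
    refine mul_le_mul_of_nonneg_left ?_ (hlam 𝕜)
    refine Finset.sum_le_sum fun θ _ => ?_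
    refine mul_le_mul_of_nonneg_left ?_ (hμpos θ).le
    exact hφmax 𝕜 θ (ψ 𝕜 θ) ⟨(hψ 𝕜 h0 θ).1, (hψ 𝕜 h0 θ).2.1, (hψ 𝕜 h0 θ).2.2⟩
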